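/- Let X be an n-dimensional real Banach space with n ≥ 3, let Y be a real Banach space, and let T : X → Y be a bounded linear operator whose norm attainment set M_T has at least 4 elements. Suppose: (a) there exists a basis {x_1, x_2, …, x_n} of X with x_1, x_2 ∈ M_T; and (b) there exist real scalars α_3, …, α_n and β_3, …, β_n such that for every w ∈ M_T, writing w = c_1 x_1 + c_2 x_2 + ⋯ + c_n x_n in this basis, one has c_1 + c_2 + α_3 c_3 + ⋯ + α_n c_n ≠ 0 and c_1 − c_2 + β_3 c_3 + ⋯ + β_n c_n ≠ 0. Then at least one of the following holds: (i) ⋃_{x ∈ M_T} (Tx)^⊥ = Y; or (ii) T does not satisfy the Bhatia–Šemrl property, i.e., there exists a bounded linear operator A : X → Y with T ⊥_B A such that Tx is not Birkhoff–James orthogonal to Ax for any x ∈ M_T. -/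

import Mathlib

/-- Birkhoff–James orthogonality: `x ⊥_B y` iff `‖x + λ y‖ ≥ ‖x‖` for all real `λ`. -/
def BJOrth {E : Type*} [NormedAddCommGroup E] [NormedSpace ℝ E] (x y : E) : Prop :=
  ∀ lam : ℝ, ‖x‖ ≤ ‖x + lam • y‖

/-- The norm attainment set of a bounded linear operator. -/
def normAttainSet {X Y : Type*} [NormedAddCommGroup X] [NormedSpace ℝ X]
    [NormedAddCommGroup Y] [NormedSpace ℝ Y] (T : X →L[ℝ] Y) : Set X :=
  {x | ‖x‖ = 1 ∧ ‖T x‖ = ‖T‖}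

lemma pos_or_neg {E : Type*} [NormedAddCommGroup E] [NormedSpace ℝ E] (u v : E) :
    (∀ l : ℝ, 0 ≤ l → ‖u‖ ≤ ‖u + l • v‖) ∨ (∀ l : ℝ, 0 ≤ l → ‖u‖ ≤ ‖u - l • v‖) := by
  by_contra h
  push_neg at h
  obtain ⟨⟨l1, hl1, h1⟩, ⟨l2, hl2, h2⟩⟩ := h
  have hl1' : 0 < l1 := by
    rcases hl1.lt_or_eq with h' | h'
    · exact h'
    · simp [← h'] at h1
  have hl2' : 0 < l2 := by
    rcases hl2.lt_or_eq with h' | h'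
    · exact h'
    · simp [← h'] at h2
  have hs : (0:ℝ) < l1 + l2 := by linarith
  have key : u = (l2 / (l1 + l2)) • (u + l1 • v) + (l1 / (l1 + l2)) • (u - l2 • v) := by
    rw [smul_add, smul_sub, smul_smul, smul_smul]
    rw [show l2 / (l1 + l2) * l1 = l1 / (l1 + l2) * l2 by ring]
    have : (l2 / (l1 + l2)) • u + (l1 / (l1 + l2)) • u = u := by
      rw [← add_smul]
      rw [show l2 / (l1 + l2) + l1 / (l1 + l2) = 1 by field_simp; ring]
      simp
    abel_nf
    rw [← add_smul]
    rw [show l2 / (l1 + l2) + l1 / (l1 + l2) = 1 by field_simp; ring]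
    simp
  have hnorm : ‖u‖ = ‖(l2 / (l1 + l2)) • (u + l1 • v) + (l1 / (l1 + l2)) • (u - l2 • v)‖ := by
    rw [← key]
  have := calc ‖u‖ = ‖(l2 / (l1 + l2)) • (u + l1 • v) + (l1 / (l1 + l2)) • (u - l2 • v)‖ :=
      hnorm
    _ ≤ (l2 / (l1 + l2)) * ‖u + l1 • v‖ + (l1 / (l1 + l2)) * ‖u - l2 • v‖ := by
        refine (norm_add_le _ _).trans ?_
        rw [norm_smul, norm_smul, Real.norm_eq_abs, Real.norm_eq_abs,
          abs_of_pos (by positivity), abs_of_pos (by positivity)]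
    _ < (l2 / (l1 + l2)) * ‖u‖ + (l1 / (l1 + l2)) * ‖u‖ := by
        gcongr <;> positivity
    _ = ‖u‖ := by field_simp; ring
  exact lt_irrefl _ this

lemma bs_key {X Y : Type*} [NormedAddCommGroup X] [NormedSpace ℝ X]
    [NormedAddCommGroup Y] [NormedSpace ℝ Y]
    (T A : X →L[ℝ] Y) (x z : X) (hx : x ∈ normAttainSet T) (hz : z ∈ normAttainSet T)
    (h1 : ∀ l : ℝ, 0 ≤ l → ‖T x‖ ≤ ‖T x + l • A x‖)
    (h2 : ∀ l : ℝ, 0 ≤ l → ‖T z‖ ≤ ‖T z - l • A z‖) :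
    ∀ lam : ℝ, ‖T‖ ≤ ‖T + lam • A‖ := by
  intro lam
  rcases le_or_gt 0 lam with hl | hl
  · calc ‖T‖ = ‖T x‖ := hx.2.symm
      _ ≤ ‖T x + lam • A x‖ := h1 lam hl
      _ = ‖(T + lam • A) x‖ := by simp
      _ ≤ ‖T + lam • A‖ * ‖x‖ := (T + lam • A).le_opNorm x
      _ = ‖T + lam • A‖ := by rw [hx.1, mul_one]
  · calc ‖T‖ = ‖T z‖ := hz.2.symm
      _ ≤ ‖T z - (-lam) • A z‖ := h2 (-lam) (by linarith)
      _ = ‖(T + lam • A) z‖ := by rw [neg_smul, sub_neg_eq_add]; simp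
      _ ≤ ‖T + lam • A‖ * ‖z‖ := (T + lam • A).le_opNorm z
      _ = ‖T + lam • A‖ := by rw [hz.1, mul_one]

lemma notBJ_smul {E : Type*} [NormedAddCommGroup E] [NormedSpace ℝ E]
    (u y : E) (c : ℝ) (hc : c ≠ 0) (h : ¬ BJOrth u y) : ¬ BJOrth u (c • y) := by
  intro h'
  apply h
  intro lam
  have := h' (lam / c)
  rwa [smul_smul, div_mul_cancel₀ _ hc] at this

theorem stmt2 {X Y : Type*} [NormedAddCommGroup X] [NormedSpace ℝ X] [CompleteSpace X]
    [NormedAddCommGroup Y] [NormedSpace ℝ Y] [CompleteSpace Y]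
    (n : ℕ) (hn : 3 ≤ n) (hX : Module.finrank ℝ X = n)
    (T : X →L[ℝ] Y)
    (hcard : 4 ≤ Cardinal.mk ↥(normAttainSet T))
    (b : Module.Basis (Fin n) ℝ X)
    (hb0 : b ⟨0, by omega⟩ ∈ normAttainSet T)
    (hb1 : b ⟨1, by omega⟩ ∈ normAttainSet T)
    (α β : Fin n → ℝ)
    (hαβ : ∀ w ∈ normAttainSet T,
      (b.repr w ⟨0, by omega⟩ + b.repr w ⟨1, by omega⟩ +
        ∑ i ∈ Finset.univ.filter (fun i : Fin n => 2 ≤ (i : ℕ)), α i * b.repr w i) ≠ 0 ∧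
      (b.repr w ⟨0, by omega⟩ - b.repr w ⟨1, by omega⟩ +
        ∑ i ∈ Finset.univ.filter (fun i : Fin n => 2 ≤ (i : ℕ)), β i * b.repr w i) ≠ 0) :
    (⋃ x ∈ normAttainSet T, {y : Y | BJOrth (T x) y}) = Set.univ ∨
    (∃ A : X →L[ℝ] Y, (∀ lam : ℝ, ‖T‖ ≤ ‖T + lam • A‖) ∧
      ∀ x ∈ normAttainSet T, ¬ BJOrth (T x) (A x)) := by
  haveI : FiniteDimensional ℝ X := Module.Finite.of_basis b
  by_cases hU : (⋃ x ∈ normAttainSet T, {y : Y | BJOrth (T x) y}) = Set.univ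
  · exact Or.inl hU
  right
  obtain ⟨y, hy⟩ : ∃ y : Y, ∀ x ∈ normAttainSet T, ¬ BJOrth (T x) y := by
    rcases (Set.ne_univ_iff_exists_notMem _).mp hU with ⟨y, hy⟩
    refine ⟨y, fun x hx hB => hy ?_⟩
    exact Set.mem_biUnion hx hB
  set i0 : Fin n := ⟨0, by omega⟩ with hi0
  set i1 : Fin n := ⟨1, by omega⟩ with hi1
  set S := Finset.univ.filter (fun i : Fin n => 2 ≤ (i : ℕ)) with hS
  set eα : X →ₗ[ℝ] ℝ := b.coord i0 + b.coord i1 + ∑ i ∈ S, α i • b.coord i with heαdef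
  set eβ : X →ₗ[ℝ] ℝ := b.coord i0 - b.coord i1 + ∑ i ∈ S, β i • b.coord i with heβdef
  have heα : ∀ w : X, eα w = b.repr w i0 + b.repr w i1 + ∑ i ∈ S, α i * b.repr w i := by
    intro w
    simp [heαdef, Module.Basis.coord_apply, smul_eq_mul]
  have heβ : ∀ w : X, eβ w = b.repr w i0 - b.repr w i1 + ∑ i ∈ S, β i * b.repr w i := by
    intro w
    simp [heβdef, Module.Basis.coord_apply, smul_eq_mul]
  have hrepr : ∀ j k : Fin n, b.repr (b j) k = if j = k then 1 else 0 := by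
    intro j k
    rw [b.repr_self]
    exact Finsupp.single_apply
  have hsum0 : ∀ (c : Fin n → ℝ) (j : Fin n), (j:ℕ) < 2 →
      ∑ i ∈ S, c i * b.repr (b j) i = 0 := by
    intro c j hj
    apply Finset.sum_eq_zero
    intro i hi
    rw [hS, Finset.mem_filter] at hi
    rw [hrepr, if_neg, mul_zero]
    rintro rfl
    omega
  have h01 : i0 ≠ i1 := fun h => by simpa [hi0, hi1] using congrArg Fin.val h
  have hα0 : eα (b i0) = 1 := by
    rw [heα, hrepr, hrepr, if_pos rfl, if_neg h01,
      hsum0 α i0 (by norm_num [hi0])]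
    norm_num
  have hα1 : eα (b i1) = 1 := by
    rw [heα, hrepr, hrepr, if_pos rfl, if_neg h01.symm,
      hsum0 α i1 (by norm_num [hi1])]
    norm_num
  have hβ0 : eβ (b i0) = 1 := by
    rw [heβ, hrepr, hrepr, if_pos rfl, if_neg h01,
      hsum0 β i0 (by norm_num [hi0])]
    norm_num
  have hβ1 : eβ (b i1) = -1 := by
    rw [heβ, hrepr, hrepr, if_pos rfl, if_neg h01.symm,
      hsum0 β i1 (by norm_num [hi1])]
    norm_num
  set Aα : X →L[ℝ] Y := LinearMap.toContinuousLinearMap (eα.smulRight y) with hAαdef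
  set Aβ : X →L[ℝ] Y := LinearMap.toContinuousLinearMap (eβ.smulRight y) with hAβdef
  have hAα : ∀ w : X, Aα w = eα w • y := fun w => rfl
  have hAβ : ∀ w : X, Aβ w = eβ w • y := fun w => rfl
  have hnα : ∀ x ∈ normAttainSet T, ¬ BJOrth (T x) (Aα x) := by
    intro x hx
    rw [hAα]
    exact notBJ_smul _ _ _ (by rw [heα]; exact (hαβ x hx).1) (hy x hx)
  have hnβ : ∀ x ∈ normAttainSet T, ¬ BJOrth (T x) (Aβ x) := by
    intro x hx
    rw [hAβ]
    exact notBJ_smul _ _ _ (by rw [heβ]; exact (hαβ x hx).2) (hy x hx)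
  rcases pos_or_neg (T (b i0)) y with P1 | N1 <;> rcases pos_or_neg (T (b i1)) y with P2 | N2
  · refine ⟨Aβ, bs_key T Aβ (b i0) (b i1) hb0 hb1 ?_ ?_, hnβ⟩
    · intro l hl
      rw [hAβ, hβ0, one_smul]
      exact P1 l hl
    · intro l hl
      rw [hAβ, hβ1, neg_one_smul, smul_neg, sub_neg_eq_add]
      exact P2 l hl
  · refine ⟨Aα, bs_key T Aα (b i0) (b i1) hb0 hb1 ?_ ?_, hnα⟩
    · intro l hl
      rw [hAα, hα0, one_smul]
      exact P1 l hl
    · intro l hl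
      rw [hAα, hα1, one_smul]
      exact N2 l hl
  · refine ⟨Aα, bs_key T Aα (b i1) (b i0) hb1 hb0 ?_ ?_, hnα⟩
    · intro l hl
      rw [hAα, hα1, one_smul]
      exact P2 l hl
    · intro l hl
      rw [hAα, hα0, one_smul]
      exact N1 l hl
  · refine ⟨Aβ, bs_key T Aβ (b i1) (b i0) hb1 hb0 ?_ ?_, hnβ⟩
    · intro l hl
      rw [hAβ, hβ1, neg_one_smul, smul_neg, ← sub_eq_add_neg]
      exact N2 l hl
    · intro l hl
      rw [hAβ, hβ0, one_smul]
      exact N1 l hl
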